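/- Let A be a Dedekind domain with fraction field K, let σ ∈ A be an element which is not a square in K, let L be a field extension of K of degree 2 containing an element s with s² = σ (so L = K(s)), and let B be the integral closure of A in L. Let 𝔭 be a nonzero prime ideal of A such that 2 ∉ 𝔭 and σ ∉ 𝔭, and suppose there exists x ∈ A with σ − x² ∈ 𝔭. Then the ideals 𝔮₁ = 𝔭B + (x − s)B and 𝔮₂ = 𝔭B + (x + s)B of B are two distinct prime ideals and 𝔭B = 𝔮₁·𝔮₂. -/

import Mathlib

open Polynomial
set_option maxHeartbeats 1000000

lemma quad_aux
    (A : Type*) [CommRing A] [IsDedekindDomain A]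
    (K : Type*) [Field K] [Algebra A K] [IsFractionRing A K]
    (L : Type*) [Field L] [Algebra K L] [Algebra A L] [IsScalarTower A K L]
    (hdeg : Module.finrank K L = 2)
    (σ : A) (hσ : ¬ ∃ y : K, y ^ 2 = algebraMap A K σ)
    (s : L) (hs2 : s ^ 2 = algebraMap A L σ)
    (hs : s ∈ integralClosure A L)
    (𝔭 : Ideal A) (hprime : 𝔭.IsPrime) (hbot : 𝔭 ≠ ⊥)
    (h2 : (2 : A) ∉ 𝔭) (hσp : σ ∉ 𝔭)
    (x : A) (hx : σ - x ^ 2 ∈ 𝔭) :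
    (Ideal.map (algebraMap A (integralClosure A L)) 𝔭 ⊔
      Ideal.span {(⟨algebraMap A L x, Subalgebra.algebraMap_mem _ x⟩ - ⟨s, hs⟩ :
        integralClosure A L)}).IsPrime ∧
    (Ideal.map (algebraMap A (integralClosure A L)) 𝔭 ⊔
      Ideal.span {(⟨algebraMap A L x, Subalgebra.algebraMap_mem _ x⟩ - ⟨s, hs⟩ :
        integralClosure A L)}).comap (algebraMap A (integralClosure A L)) = 𝔭 := by
  set B := integralClosure A L with hB
  set ι := algebraMap A B with hι
  have hinjAK : Function.Injective (algebraMap A K) := IsFractionRing.injective A K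
  have hinjKL : Function.Injective (algebraMap K L) := (algebraMap K L).injective
  have hinjAL : Function.Injective (algebraMap A L) := by
    rw [IsScalarTower.algebraMap_eq A K L]; exact hinjKL.comp hinjAK
  have hsK : ∀ y : K, algebraMap K L y ≠ s := by
    intro y hy
    refine hσ ⟨y, hinjKL ?_⟩
    rw [map_pow, hy, hs2, IsScalarTower.algebraMap_apply A K L]
  have hσ0 : algebraMap A K σ ≠ 0 := by
    intro h
    apply hσp
    have : σ = 0 := hinjAK (by simpa using h)
    simp [this]
  have hs0 : s ≠ 0 := by
    intro h; exact hsK 0 (by simp [h])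
  -- linear independence of ![1, s]
  have hli : LinearIndependent K ![(1 : L), s] := by
    rw [linearIndependent_fin2]
    refine ⟨by simpa using hs0, fun a ha => ?_⟩
    simp only [Matrix.cons_val_one, Matrix.head_cons, Matrix.cons_val_zero] at ha
    have ha0 : a ≠ 0 := by rintro rfl; simp at ha
    refine hsK a⁻¹ ?_
    have : s = a⁻¹ • (1 : L) := by
      rw [← ha, smul_smul, inv_mul_cancel₀ ha0, one_smul]
    rw [this, Algebra.smul_def, mul_one]
  have hcard : Fintype.card (Fin 2) = Module.finrank K L := by simp [hdeg]
  set bas : Module.Basis (Fin 2) K L := basisOfLinearIndependentOfCardEqFinrank hli hcard with hbasdef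
  have hbas : ⇑bas = ![(1 : L), s] := coe_basisOfLinearIndependentOfCardEqFinrank _ _
  -- power basis
  let pb : PowerBasis K L :=
    { gen := s, dim := 2, basis := bas,
      basis_eq_pow := by
        intro i
        fin_cases i <;> simp [hbas] }
  have hpbgen : pb.gen = s := rfl
  -- minimal polynomial
  have haev : Polynomial.aeval s ((X : K[X]) ^ 2 - C (algebraMap A K σ)) = 0 := by
    rw [map_sub, map_pow, aeval_X, aeval_C, hs2, ← IsScalarTower.algebraMap_apply A K L, sub_self]
  have hmonic : ((X : K[X]) ^ 2 - C (algebraMap A K σ)).Monic :=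
    monic_X_pow_sub_C _ two_ne_zero
  have hsintK : IsIntegral K s := ⟨_, hmonic, haev⟩
  have hmin : minpoly K s = (X : K[X]) ^ 2 - C (algebraMap A K σ) := by
    have hdvd := minpoly.dvd K s haev
    have hnd : ((X : K[X]) ^ 2 - C (algebraMap A K σ)).natDegree = 2 :=
      natDegree_X_pow_sub_C
    have hmd : (minpoly K s).natDegree = 2 := by
      have := pb.natDegree_minpoly
      rwa [hpbgen] at this
    exact eq_of_monic_of_associated (minpoly.monic hsintK) hmonic
      (Polynomial.associated_of_dvd_of_natDegree_le hdvd hmonic.ne_zero (by rw [hnd, hmd]))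
  -- the conjugation
  have hroot : Polynomial.aeval (-s) (minpoly K pb.gen) = 0 := by
    rw [hpbgen, hmin, map_sub, map_pow, aeval_X, aeval_C, neg_pow, hs2,
      ← IsScalarTower.algebraMap_apply A K L]
    ring
  set τ : L →ₐ[K] L := pb.lift (-s) hroot with hτdef
  have hτs : τ s = -s := pb.lift_gen _ _
  have hτK : ∀ y : K, τ (algebraMap K L y) = algebraMap K L y := fun y => τ.commutes y
  have hτA : ∀ a : A, τ (algebraMap A L a) = algebraMap A L a := by
    intro a
    rw [IsScalarTower.algebraMap_apply A K L]
    exact τ.commutes _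
  -- conjugation on B
  have hτint : ∀ b : B, τ (b : L) ∈ B := fun b =>
    IsIntegral.map (τ.restrictScalars A) b.2
  set τB : B →ₐ[A] B :=
    ((τ.restrictScalars A).comp B.val).codRestrict B hτint with hτBdef
  have hτBval : ∀ b : B, (τB b : L) = τ (b : L) := fun b => rfl
  set xb : B := (⟨algebraMap A L x, Subalgebra.algebraMap_mem _ x⟩ : B) with hxbdef
  set sb : B := (⟨s, hs⟩ : B) with hsbdef
  have hιval : ∀ a : A, ((ι a : B) : L) = algebraMap A L a := fun a => by
    rw [hι, IsScalarTower.algebraMap_apply A B L]; rfl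
  have hxb : xb = ι x := Subtype.ext (by rw [hιval])
  have hτBs : τB sb = -sb := Subtype.ext (by
    rw [hτBval]; show τ s = -s; exact hτs)
  have hτBA : ∀ a : A, τB (ι a) = ι a := fun a => Subtype.ext (by
    rw [hτBval, hιval, hτA])
  set q₁ : Ideal B := Ideal.map ι 𝔭 ⊔ Ideal.span {xb - sb} with hq₁def
  set q₂ : Ideal B := Ideal.map ι 𝔭 ⊔ Ideal.span {xb + sb} with hq₂def
  have hmapq : Ideal.map τB.toRingHom q₁ = q₂ := by
    rw [hq₁def, Ideal.map_sup, Ideal.map_map, Ideal.map_span, Set.image_singleton]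
    have h1 : (τB.toRingHom).comp ι = ι := RingHom.ext fun a => hτBA a
    have h2 : τB.toRingHom (xb - sb) = xb + sb := by
      show τB (xb - sb) = xb + sb
      rw [map_sub, hτBs, hxb, hτBA, ← hxb, sub_neg_eq_add]
    rw [h1, h2]
  have hpBne : Ideal.map ι 𝔭 ≠ ⊤ := by
    have hker : (⊥ : Ideal B).comap ι ≤ 𝔭 := by
      intro a ha
      rw [Ideal.mem_comap, Ideal.mem_bot] at ha
      have : algebraMap A L a = 0 := by rw [← hιval a, ha]; simp
      have : a = 0 := hinjAL (by simpa using this)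
      simp [this]
    obtain ⟨Q, -, hQp, hQc⟩ := Ideal.exists_ideal_over_prime_of_isIntegral 𝔭 ⊥ hker
    intro htop
    have hle : Ideal.map ι 𝔭 ≤ Q := Ideal.map_le_iff_le_comap.mpr (le_of_eq hQc.symm)
    exact hQp.ne_top (top_le_iff.mp (htop ▸ hle))
  have hprodgen : (xb - sb) * (xb + sb) = ι (x ^ 2 - σ) := Subtype.ext (by
    have h1 : (((xb - sb) * (xb + sb) : B) : L) = algebraMap A L x ^ 2 - s ^ 2 := by
      push_cast; ring
    rw [h1, hs2, hιval, map_sub, map_pow])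
  have hq12le : q₁ * q₂ ≤ Ideal.map ι 𝔭 := by
    rw [hq₁def, hq₂def, Ideal.sup_mul, Ideal.mul_sup, Ideal.mul_sup]
    refine sup_le (sup_le Ideal.mul_le_left Ideal.mul_le_left) (sup_le Ideal.mul_le_right ?_)
    rw [Ideal.span_singleton_mul_span_singleton, hprodgen, Ideal.span_singleton_le_iff_mem]
    exact Ideal.mem_map_of_mem ι (by simpa using 𝔭.neg_mem hx)
  have hq1ne : q₁ ≠ ⊤ := by
    intro h
    have h1 : (1 : B) ∈ q₁ := h ▸ Submodule.mem_top
    have h1' : (1 : B) ∈ q₂ := by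
      have := Ideal.mem_map_of_mem τB.toRingHom h1
      rwa [hmapq, map_one] at this
    have : (1 : B) ∈ q₁ * q₂ := by simpa using Ideal.mul_mem_mul h1 h1'
    exact hpBne (Ideal.eq_top_iff_one _ |>.mpr (hq12le this))
  have hmax : 𝔭.IsMaximal := hprime.isMaximal hbot
  have hcomap : q₁.comap ι = 𝔭 := by
    have hle : 𝔭 ≤ q₁.comap ι :=
      le_trans Ideal.le_comap_map (Ideal.comap_mono le_sup_left)
    refine (hmax.eq_of_le (fun h => ?_) hle).symm
    exact hq1ne (Ideal.eq_top_iff_one _ |>.mpr (by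
      have : (1 : A) ∈ q₁.comap ι := h ▸ Submodule.mem_top
      simpa using this))
  -- every element of B is congruent to an element of A modulo q₁
  have hxsq : sb - ι x ∈ q₁ := by
    have : xb - sb ∈ q₁ := Ideal.mem_sup_right (Ideal.subset_span rfl)
    have h' := q₁.neg_mem this
    rwa [neg_sub, hxb] at h'
  have key : ∀ b : B, ∃ a : A, b - ι a ∈ q₁ := by
    intro b
    have hbmem : (b : L) ∈ Submodule.span K ({1, s} : Set L) := by
      have hr : Set.range ![(1 : L), s] = {1, s} := by
        ext z; simp [Fin.exists_fin_two]; tauto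
      have := bas.span_eq
      rw [hbas, hr] at this
      rw [this]; exact Submodule.mem_top
    obtain ⟨c, d, hcd⟩ := Submodule.mem_span_pair.mp hbmem
    have hbL : (b : L) = algebraMap K L c + algebraMap K L d * s := by
      rw [← hcd, Algebra.smul_def, Algebra.smul_def, mul_one]
    have hτb : τ (b : L) = algebraMap K L c - algebraMap K L d * s := by
      rw [hbL, map_add, map_mul, hτK, hτK, hτs]; ring
    have hbi : IsIntegral A (b : L) := b.2
    have hτbi : IsIntegral A (τ (b : L)) := hbi.map (τ.restrictScalars A)
    have hss : s ^ 2 = algebraMap K L (algebraMap A K σ) := by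
      rw [hs2, IsScalarTower.algebraMap_apply A K L]
    have htr : IsIntegral A (algebraMap K L (2 * c)) := by
      have he : (b : L) + τ (b : L) = algebraMap K L (2 * c) := by
        rw [hτb, hbL, map_mul, map_ofNat]; ring
      exact he ▸ hbi.add hτbi
    have hnm : IsIntegral A (algebraMap K L (c ^ 2 - d ^ 2 * algebraMap A K σ)) := by
      have he : (b : L) * τ (b : L)
          = algebraMap K L (c ^ 2 - d ^ 2 * algebraMap A K σ) := by
        rw [hτb, hbL, map_sub, map_mul, map_pow, map_pow, ← hss]; ring
      exact he ▸ hbi.mul hτbi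
    obtain ⟨a₁, ha₁⟩ := IsIntegrallyClosed.isIntegral_iff.mp
      ((isIntegral_algebraMap_iff hinjKL).mp htr)
    obtain ⟨a₂, ha₂⟩ := IsIntegrallyClosed.isIntegral_iff.mp
      ((isIntegral_algebraMap_iff hinjKL).mp hnm)
    have ha₃ : algebraMap A K (a₁ ^ 2 - 4 * a₂)
        = (2 * d) ^ 2 * algebraMap A K σ := by
      rw [map_sub, map_mul, map_pow, ha₁, ha₂, map_ofNat]; ring
    -- 2dσ is integral over A
    have h2dσ : IsIntegral A (2 * d * algebraMap A K σ : K) := by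
      refine ⟨X ^ 2 - C ((a₁ ^ 2 - 4 * a₂) * σ), monic_X_pow_sub_C _ two_ne_zero, ?_⟩
      show Polynomial.eval₂ (algebraMap A K) (2 * d * algebraMap A K σ)
        ((X : A[X]) ^ 2 - C ((a₁ ^ 2 - 4 * a₂) * σ)) = 0
      rw [Polynomial.eval₂_sub, Polynomial.eval₂_pow, Polynomial.eval₂_X,
        Polynomial.eval₂_C, map_mul, ha₃]
      ring
    obtain ⟨a₄, ha₄⟩ := IsIntegrallyClosed.isIntegral_iff.mp h2dσ
    -- the key identity :  (2σ) • b = σa₁ + a₄ s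
    have hc' : algebraMap A K (σ * a₁) = algebraMap A K (2 * σ) * c := by
      rw [map_mul, ha₁, map_mul, map_ofNat]; ring
    have hd' : algebraMap A K a₄ = algebraMap A K (2 * σ) * d := by
      rw [ha₄, map_mul, map_ofNat]; ring
    have hgoal : algebraMap K L (algebraMap A K (2 * σ)) * (b : L)
        = algebraMap K L (algebraMap A K (σ * a₁))
          + algebraMap K L (algebraMap A K a₄) * s := by
      rw [hbL, hc', hd', map_mul (algebraMap K L), map_mul (algebraMap K L)]
      ring
    have hkey : ι (2 * σ) * b = ι (σ * a₁) + ι a₄ * sb := by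
      apply Subtype.ext
      have hcast : ((ι (2 * σ) * b : B) : L) = algebraMap A L (2 * σ) * (b : L) := by
        rw [MulMemClass.coe_mul, hιval]
      have hcast2 : ((ι (σ * a₁) + ι a₄ * sb : B) : L)
          = algebraMap A L (σ * a₁) + algebraMap A L a₄ * s := by
        rw [AddMemClass.coe_add, MulMemClass.coe_mul, hιval, hιval]
      rw [hcast, hcast2, IsScalarTower.algebraMap_apply A K L (2 * σ),
        IsScalarTower.algebraMap_apply A K L (σ * a₁),
        IsScalarTower.algebraMap_apply A K L a₄]
      exact hgoal
    -- invert 2σ modulo 𝔭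
    have h2σ : (2 * σ : A) ∉ 𝔭 := fun h => (hprime.mem_or_mem h).elim h2 hσp
    have hsup : 𝔭 ⊔ Ideal.span {2 * σ} = ⊤ := by
      by_contra h
      have heq := hmax.eq_of_le h le_sup_left
      exact h2σ (heq ▸ Ideal.mem_sup_right (Ideal.subset_span rfl))
    have h1mem : (1 : A) ∈ 𝔭 ⊔ Ideal.span {2 * σ} := hsup ▸ Submodule.mem_top
    obtain ⟨p', hp', z, hz, hsum⟩ := Submodule.mem_sup.mp h1mem
    obtain ⟨u, hu⟩ := Ideal.mem_span_singleton'.mp hz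
    refine ⟨u * (σ * a₁) + u * a₄ * x, ?_⟩
    have hone : (1 : B) = ι p' + ι u * ι (2 * σ) := by
      have h1 : ι (p' + u * (2 * σ)) = 1 := by
        rw [show p' + u * (2 * σ) = (1 : A) from by rw [hu]; exact hsum, map_one]
      rw [← h1, map_add, map_mul]
    have hrw : b - ι (u * (σ * a₁) + u * a₄ * x)
        = ι p' * b + (ι u * ι a₄) * (sb - ι x) := by
      calc b - ι (u * (σ * a₁) + u * a₄ * x)
          = (ι p' + ι u * ι (2 * σ)) * b - ι (u * (σ * a₁) + u * a₄ * x) := by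
            rw [← hone, one_mul]
        _ = ι p' * b + ι u * (ι (2 * σ) * b) - ι (u * (σ * a₁) + u * a₄ * x) := by ring
        _ = ι p' * b + ι u * (ι (σ * a₁) + ι a₄ * sb)
            - ι (u * (σ * a₁) + u * a₄ * x) := by rw [hkey]
        _ = ι p' * b + (ι u * ι a₄) * (sb - ι x) := by
            simp only [map_add, map_mul]; ring
    rw [hrw]
    exact Ideal.add_mem _
      (Ideal.mul_mem_right _ _ (Ideal.mem_sup_left (Ideal.mem_map_of_mem ι hp')))
      (Ideal.mul_mem_left _ _ hxsq)
  -- primality of q₁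
  have hsurj : Function.Surjective ((Ideal.Quotient.mk q₁).comp ι) := by
    intro bq
    obtain ⟨b, rfl⟩ := Ideal.Quotient.mk_surjective bq
    obtain ⟨a, ha⟩ := key b
    refine ⟨a, ?_⟩
    rw [RingHom.comp_apply]
    exact Ideal.Quotient.eq.mpr (by simpa using q₁.neg_mem ha)
  have hker : RingHom.ker ((Ideal.Quotient.mk q₁).comp ι) = 𝔭 := by
    rw [← RingHom.comap_ker, Ideal.mk_ker]
    exact hcomap
  have hdom : IsDomain (B ⧸ q₁) := by
    haveI := hprime
    have e : A ⧸ RingHom.ker ((Ideal.Quotient.mk q₁).comp ι) ≃+* B ⧸ q₁ :=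
      RingHom.quotientKerEquivOfSurjective hsurj
    rw [hker] at e
    exact Function.Injective.isDomain e.symm.toRingHom e.symm.injective
  exact ⟨(Ideal.Quotient.isDomain_iff_prime q₁).mp hdom, hcomap⟩




/-- (Splitting of primes in a quadratic extension.)
Let `A` be a Dedekind domain with fraction field `K`, let `σ ∈ A` be a non-square
in `K`, let `L = K(√σ)` be a quadratic extension of `K` containing `s` with `s² = σ`,
and let `B` be the integral closure of `A` in `L`.  If `𝔭` is a nonzero prime of `A`
with `2 ∉ 𝔭`, `σ ∉ 𝔭`, and `σ ≡ x² (mod 𝔭)` for some `x ∈ A`, then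
`𝔭B` splits as the product of the two distinct primes
`𝔮₁ = 𝔭B + (x - s)B` and `𝔮₂ = 𝔭B + (x + s)B`. -/
theorem prime_splitting_in_quadratic_extension
    (A : Type*) [CommRing A] [IsDedekindDomain A]
    (K : Type*) [Field K] [Algebra A K] [IsFractionRing A K]
    (L : Type*) [Field L] [Algebra K L] [Algebra A L] [IsScalarTower A K L]
    (hdeg : Module.finrank K L = 2)
    (σ : A) (hσ : ¬ ∃ y : K, y ^ 2 = algebraMap A K σ)
    (s : L) (hs2 : s ^ 2 = algebraMap A L σ)
    (hs : s ∈ integralClosure A L)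
    (𝔭 : Ideal A) (hprime : 𝔭.IsPrime) (hbot : 𝔭 ≠ ⊥)
    (h2 : (2 : A) ∉ 𝔭) (hσp : σ ∉ 𝔭)
    (x : A) (hx : σ - x ^ 2 ∈ 𝔭) :
    letI B := integralClosure A L
    letI xB : B := ⟨algebraMap A L x, Subalgebra.algebraMap_mem B x⟩
    letI sB : B := ⟨s, hs⟩
    letI q₁ : Ideal B := Ideal.map (algebraMap A B) 𝔭 ⊔ Ideal.span {xB - sB}
    letI q₂ : Ideal B := Ideal.map (algebraMap A B) 𝔭 ⊔ Ideal.span {xB + sB}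
    q₁ ≠ q₂ ∧ q₁.IsPrime ∧ q₂.IsPrime ∧
      Ideal.map (algebraMap A B) 𝔭 = q₁ * q₂ := by
  have hs2' : (-s) ^ 2 = algebraMap A L σ := by rw [neg_sq]; exact hs2
  have hsneg : -s ∈ integralClosure A L := neg_mem hs
  obtain ⟨hp₁, hc₁⟩ := quad_aux A K L hdeg σ hσ s hs2 hs 𝔭 hprime hbot h2 hσp x hx
  obtain ⟨hp₂, hc₂⟩ := quad_aux A K L hdeg σ hσ (-s) hs2' hsneg 𝔭 hprime hbot h2 hσp x hx
  set B : Subalgebra A L := integralClosure A L with hB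
  set ι := algebraMap A B with hι
  set xb : B := (⟨algebraMap A L x, Subalgebra.algebraMap_mem _ x⟩ : B) with hxbdef
  set sb : B := (⟨s, hs⟩ : B) with hsbdef
  set q₁ : Ideal B := Ideal.map ι 𝔭 ⊔ Ideal.span {xb - sb} with hq₁def
  set q₂ : Ideal B := Ideal.map ι 𝔭 ⊔ Ideal.span {xb + sb} with hq₂def
  have hspan : ((⟨algebraMap A L x, Subalgebra.algebraMap_mem _ x⟩ : B) - ⟨-s, hsneg⟩ : B)
      = xb + sb := Subtype.ext (by
    show algebraMap A L x - (-s) = algebraMap A L x + s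
    ring)
  rw [hspan] at hp₂ hc₂
  have hιval : ∀ a : A, ((ι a : B) : L) = algebraMap A L a := fun a => by
    rw [hι, IsScalarTower.algebraMap_apply A B L]; rfl
  have hxbι : xb = ι x := Subtype.ext (by rw [hιval])
  have hmax : 𝔭.IsMaximal := hprime.isMaximal hbot
  -- the two primes are distinct
  have hne : q₁ ≠ q₂ := by
    intro heq
    have hm1 : xb - sb ∈ q₁ := Ideal.mem_sup_right (Ideal.subset_span rfl)
    have hm2 : xb + sb ∈ q₁ := by
      rw [heq]; exact Ideal.mem_sup_right (Ideal.subset_span rfl)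
    have h2s : sb + sb ∈ q₁ := by
      have hd := q₁.sub_mem hm2 hm1
      rwa [show xb + sb - (xb - sb) = sb + sb from by ring] at hd
    have h4σ : ι (4 * σ) ∈ q₁ := by
      have hm := q₁.mul_mem_left (sb + sb) h2s
      have heq4 : (sb + sb) * (sb + sb) = ι (4 * σ) := Subtype.ext (by
        have hc : (((sb + sb) * (sb + sb) : B) : L) = 4 * s ^ 2 := by
          push_cast; ring
        rw [hc, hs2, hιval, map_mul, map_ofNat])
      rwa [heq4] at hm
    have h4σ𝔭 : (4 * σ : A) ∈ 𝔭 := by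
      rw [← hc₁]
      exact Ideal.mem_comap.mpr h4σ
    rcases hprime.mem_or_mem h4σ𝔭 with h | h
    · rw [show (4 : A) = 2 * 2 from by norm_num] at h
      rcases hprime.mem_or_mem h with h' | h' <;> exact h2 h'
    · exact hσp h
  -- the product
  have hprodgen : (xb - sb) * (xb + sb) = ι (x ^ 2 - σ) := Subtype.ext (by
    have h1 : (((xb - sb) * (xb + sb) : B) : L) = algebraMap A L x ^ 2 - s ^ 2 := by
      push_cast; ring
    rw [h1, hs2, hιval, map_sub, map_pow])
  have hq12le : q₁ * q₂ ≤ Ideal.map ι 𝔭 := by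
    rw [hq₁def, hq₂def, Ideal.sup_mul, Ideal.mul_sup, Ideal.mul_sup]
    refine sup_le (sup_le Ideal.mul_le_left Ideal.mul_le_left)
      (sup_le Ideal.mul_le_right ?_)
    rw [Ideal.span_singleton_mul_span_singleton, hprodgen, Ideal.span_singleton_le_iff_mem]
    exact Ideal.mem_map_of_mem ι (by simpa using 𝔭.neg_mem hx)
  have hle2 : Ideal.map ι 𝔭 ≤ q₁ * q₂ := by
    have hx𝔭 : x ∉ 𝔭 := by
      intro hxp
      apply hσp
      have hsum : σ = (σ - x ^ 2) + x ^ 2 := by ring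
      rw [hsum]
      exact 𝔭.add_mem hx (by rw [sq]; exact 𝔭.mul_mem_left x hxp)
    have h2x : (2 * x : A) ∉ 𝔭 := fun h => (hprime.mem_or_mem h).elim h2 hx𝔭
    have hsup2 : 𝔭 ⊔ Ideal.span {2 * x} = ⊤ := by
      by_contra h
      have heq := hmax.eq_of_le h le_sup_left
      exact h2x (heq ▸ Ideal.mem_sup_right (Ideal.subset_span rfl))
    have h𝔭eq : 𝔭 = 𝔭 * 𝔭 ⊔ 𝔭 * Ideal.span {2 * x} := by
      rw [← Ideal.mul_sup, hsup2, Ideal.mul_top]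
    have hgen : ι (2 * x) = (xb - sb) + (xb + sb) := by
      apply Subtype.ext
      have hc : (((xb - sb) + (xb + sb) : B) : L) = 2 * algebraMap A L x := by
        push_cast; ring
      rw [hιval, hc, map_mul, map_ofNat]
    have hspanle : Ideal.span {ι (2 * x)} ≤ Ideal.span {xb - sb} ⊔ Ideal.span {xb + sb} := by
      rw [Ideal.span_singleton_le_iff_mem, hgen]
      exact Submodule.mem_sup.mpr
        ⟨xb - sb, Ideal.subset_span rfl, xb + sb, Ideal.subset_span rfl, rfl⟩
    calc Ideal.map ι 𝔭 = Ideal.map ι (𝔭 * 𝔭 ⊔ 𝔭 * Ideal.span {2 * x}) := by rw [← h𝔭eq]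
      _ = Ideal.map ι 𝔭 * Ideal.map ι 𝔭
          ⊔ Ideal.map ι 𝔭 * Ideal.map ι (Ideal.span {2 * x}) := by
          rw [Ideal.map_sup, Ideal.map_mul, Ideal.map_mul]
      _ ≤ q₁ * q₂ := by
          refine sup_le (Ideal.mul_mono le_sup_left le_sup_left) ?_
          rw [Ideal.map_span, Set.image_singleton]
          refine le_trans (Ideal.mul_mono (le_refl _) hspanle) ?_
          rw [Ideal.mul_sup]
          refine sup_le ?_ (Ideal.mul_mono le_sup_left le_sup_right)
          have h1 : Ideal.map ι 𝔭 * Ideal.span {xb - sb} ≤ q₂ * q₁ :=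
            Ideal.mul_mono le_sup_left le_sup_right
          rwa [mul_comm q₂ q₁] at h1
  exact ⟨hne, hp₁, hp₂, le_antisymm hle2 hq12le⟩
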